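/- Let Ω = B_c(0,a) ⊂ ℂⁿ with a > 1, let E ⊆ B(0,1) (the real unit ball in ℝⁿ ⊂ ℂⁿ) be measurable and non-pluripolar. Then |sup_{B_c(0,1)} u_{E,Ω}| ≥ |sup_{B_c(0,1)} u_{B(0,1),Ω}| · |sup_{B(0,1)} u_{E,Ω}|, where u_{F,Ω} denotes the relative extremal function of F in Ω. -/

import Mathlib

open MeasureTheory Metric Set

/-- Plurisubharmonicity for `EReal`-valued functions on an open set `Ω` of a complex
normed space: upper semicontinuity together with the sub-mean value inequality on every
complex disc contained in `Ω`, the circle average being expressed via continuous majorants. -/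
def IsPSHOnE {V : Type*} [NormedAddCommGroup V] [NormedSpace ℂ V]
    (u : V → EReal) (Ω : Set V) : Prop :=
  UpperSemicontinuousOn u Ω ∧
  ∀ a ∈ Ω, ∀ b : V, ∀ r : ℝ, 0 < r →
    (∀ w : ℂ, ‖w‖ ≤ r → a + w • b ∈ Ω) →
    ∀ g : ℝ → ℝ, Continuous g →
      (∀ θ : ℝ, u (a + (circleMap 0 r θ) • b) ≤ ((g θ : ℝ) : EReal)) →
      u a ≤ (((2 * Real.pi)⁻¹ * ∫ θ in (0:ℝ)..(2 * Real.pi), g θ : ℝ) : EReal)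

/-- Plurisubharmonicity for real-valued functions. -/
def IsPSHOn {V : Type*} [NormedAddCommGroup V] [NormedSpace ℂ V]
    (f : V → ℝ) (Ω : Set V) : Prop :=
  IsPSHOnE (fun z => ((f z : ℝ) : EReal)) Ω

/-- A set is pluripolar if it is contained in the `-∞` set of a plurisubharmonic
function on the whole space which is not identically `-∞`. -/
def IsPluripolar {V : Type*} [NormedAddCommGroup V] [NormedSpace ℂ V] (E : Set V) : Prop :=
  ∃ u : V → EReal, IsPSHOnE u Set.univ ∧ (¬ ∀ z, u z = ⊥) ∧ ∀ z ∈ E, u z = ⊥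

/-- The Lelong class: entire plurisubharmonic functions of at most logarithmic growth. -/
def InLelongClass {V : Type*} [NormedAddCommGroup V] [NormedSpace ℂ V] (f : V → ℝ) : Prop :=
  IsPSHOn f Set.univ ∧ ∃ C : ℝ, ∀ z, f z ≤ Real.log (max ‖z‖ 1) + C

/-- The Siciak extremal function of a set `E`. -/
noncomputable def siciak {V : Type*} [NormedAddCommGroup V] [NormedSpace ℂ V]
    (E : Set V) (z : V) : ℝ :=
  sSup {y | ∃ f : V → ℝ, InLelongClass f ∧ (∀ x ∈ E, f x ≤ 0) ∧ y = f z}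

/-- The relative extremal function of `E` in `Ω`. -/
noncomputable def relExtremal {V : Type*} [NormedAddCommGroup V] [NormedSpace ℂ V]
    (E Ω : Set V) (z : V) : ℝ :=
  sSup {y | ∃ f : V → ℝ, IsPSHOn f Ω ∧ (∀ x ∈ Ω, f x ≤ 0) ∧ (∀ x ∈ E, f x ≤ -1) ∧ y = f z}

/-- The function `h_E` measuring local growth of plurisubharmonic functions. -/
noncomputable def hFun {V : Type*} [NormedAddCommGroup V] [NormedSpace ℂ V]
    (A E Ω : Set V) (z : V) : ℝ :=
  sSup {y | ∃ f : V → ℝ, IsPSHOn f Ω ∧ (∀ x ∈ Ω, f x ≤ 0) ∧ -1 ≤ sSup (f '' A) ∧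
    y = f z - sSup (f '' E)}

/-- The inclusion of `ℝⁿ` into `ℂⁿ`. -/
noncomputable def embedR {n : ℕ} (x : EuclideanSpace ℝ (Fin n)) : EuclideanSpace ℂ (Fin n) :=
  WithLp.toLp 2 (fun i => ((x i : ℝ) : ℂ))

/-- `γ` is the Siciak (logarithmic) capacity of `E`:
`limsup_{s→∞} ( sup_{B_c(0,s)} V_E − log s ) = −log γ`. -/
def HasSiciakCapacity {V : Type*} [NormedAddCommGroup V] [NormedSpace ℂ V]
    (E : Set V) (γ : ℝ) : Prop :=
  Filter.limsup (fun s : ℝ => sSup (siciak E '' Metric.closedBall (0 : V) s) - Real.log s)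
    Filter.atTop = -Real.log γ

section Aux

variable {V : Type*} [NormedAddCommGroup V] [NormedSpace ℂ V]

lemma isPSHOn_const (c : ℝ) (Ω : Set V) : IsPSHOn (fun _ => c) Ω := by
  constructor
  · exact upperSemicontinuousOn_const
  · intro x hx b r hr hdisc g hg hmaj
    have h1 : ∀ θ : ℝ, c ≤ g θ := by
      intro θ
      have h := hmaj θ
      have h' : ((c : ℝ) : EReal) ≤ ((g θ : ℝ) : EReal) := h
      exact EReal.coe_le_coe_iff.1 h'
    have h2 : (2 * Real.pi) * c ≤ ∫ θ in (0:ℝ)..(2 * Real.pi), g θ := by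
      have := intervalIntegral.integral_mono_on (μ := MeasureTheory.volume)
        (by positivity : (0:ℝ) ≤ 2 * Real.pi)
        (intervalIntegrable_const (c := c)) (hg.intervalIntegrable _ _)
        (fun θ _ => h1 θ)
      simpa [mul_comm] using this
    have hpi : (0:ℝ) < 2 * Real.pi := by positivity
    have h3 : c ≤ (2 * Real.pi)⁻¹ * ∫ θ in (0:ℝ)..(2 * Real.pi), g θ := by
      rw [inv_mul_eq_div, le_div_iff₀' hpi]
      exact h2
    exact EReal.coe_le_coe_iff.2 h3

lemma usc_coe_real (f : V → ℝ) (s : Set V)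
    (h : UpperSemicontinuousOn (fun z => ((f z : ℝ) : EReal)) s) :
    UpperSemicontinuousOn f s := by
  intro x hx y hy
  have hy' : ((f x : ℝ) : EReal) < ((y : ℝ) : EReal) := EReal.coe_lt_coe_iff.2 hy
  have := h x hx (y : EReal) hy'
  filter_upwards [this] with z hz
  have hz' : ((f z : ℝ) : EReal) < ((y : ℝ) : EReal) := hz
  exact EReal.coe_lt_coe_iff.1 hz'

lemma isPSHOn_smul {f : V → ℝ} {Ω : Set V} (hf : IsPSHOn f Ω) {c : ℝ} (hc : 0 < c) :
    IsPSHOn (fun z => c * f z) Ω := by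
  obtain ⟨husc, hmv⟩ := hf
  constructor
  · have h1 : UpperSemicontinuousOn f Ω := usc_coe_real f Ω husc
    have h2 : UpperSemicontinuousOn (fun z => c * f z) Ω := by
      have := Continuous.comp_upperSemicontinuousOn
        (g := fun t : ℝ => c * t) (f := f) (continuous_const.mul continuous_id)
        h1 (fun u v huv => by simpa using mul_le_mul_of_nonneg_left huv hc.le)
      exact this
    have h3 := Continuous.comp_upperSemicontinuousOn
      (g := fun t : ℝ => ((t : ℝ) : EReal)) (f := fun z => c * f z)
      continuous_coe_real_ereal h2 (fun u v huv => EReal.coe_le_coe_iff.2 huv)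
    exact h3
  · intro x hx b r hr hdisc g hg hmaj
    have key := hmv x hx b r hr hdisc (fun θ => c⁻¹ * g θ)
      (continuous_const.mul hg) ?_
    · have hkey0 : ((f x : ℝ) : EReal) ≤
          (((2 * Real.pi)⁻¹ * ∫ θ in (0:ℝ)..(2 * Real.pi), c⁻¹ * g θ : ℝ) : EReal) := key
      have hkey : f x ≤ (2 * Real.pi)⁻¹ * ∫ θ in (0:ℝ)..(2 * Real.pi), c⁻¹ * g θ :=
        EReal.coe_le_coe_iff.1 hkey0
      rw [intervalIntegral.integral_const_mul] at hkey
      have h4 : c * f x ≤ (2 * Real.pi)⁻¹ * ∫ θ in (0:ℝ)..(2 * Real.pi), g θ := by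
        have h5 := mul_le_mul_of_nonneg_left hkey hc.le
        calc c * f x ≤ c * ((2 * Real.pi)⁻¹ * (c⁻¹ * ∫ θ in (0:ℝ)..(2 * Real.pi), g θ)) := h5
          _ = (2 * Real.pi)⁻¹ * ∫ θ in (0:ℝ)..(2 * Real.pi), g θ := by
              field_simp
      exact EReal.coe_le_coe_iff.2 h4
    · intro θ
      have h := hmaj θ
      have h0 : ((c * f (x + (circleMap 0 r θ) • b) : ℝ) : EReal) ≤ ((g θ : ℝ) : EReal) := h
      have h' : c * f (x + (circleMap 0 r θ) • b) ≤ g θ := EReal.coe_le_coe_iff.1 h0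
      have h'' : f (x + (circleMap 0 r θ) • b) ≤ c⁻¹ * g θ := by
        have h2 := mul_le_mul_of_nonneg_left h' (inv_pos.2 hc).le
        have h3 : c⁻¹ * (c * f (x + (circleMap 0 r θ) • b)) = f (x + (circleMap 0 r θ) • b) := by
          field_simp
        linarith
      exact EReal.coe_le_coe_iff.2 h''

lemma relExtremal_set_nonempty (E Ω : Set V) (z : V) :
    (-1 : ℝ) ∈ {y | ∃ f : V → ℝ, IsPSHOn f Ω ∧ (∀ x ∈ Ω, f x ≤ 0) ∧
      (∀ x ∈ E, f x ≤ -1) ∧ y = f z} :=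
  ⟨fun _ => -1, isPSHOn_const _ _, fun _ _ => by norm_num, fun _ _ => le_refl _, rfl⟩

lemma relExtremal_set_bddAbove (E Ω : Set V) (z : V) (hz : z ∈ Ω) :
    {y | ∃ f : V → ℝ, IsPSHOn f Ω ∧ (∀ x ∈ Ω, f x ≤ 0) ∧
      (∀ x ∈ E, f x ≤ -1) ∧ y = f z} ⊆ Set.Iic 0 := by
  rintro y ⟨f, _, hf0, _, rfl⟩
  exact hf0 z hz

lemma relExtremal_nonpos (E Ω : Set V) (z : V) (hz : z ∈ Ω) :
    relExtremal E Ω z ≤ 0 :=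
  csSup_le ⟨_, relExtremal_set_nonempty E Ω z⟩ (relExtremal_set_bddAbove E Ω z hz)

lemma le_relExtremal (E Ω : Set V) (z : V) (hz : z ∈ Ω) {f : V → ℝ}
    (h1 : IsPSHOn f Ω) (h2 : ∀ x ∈ Ω, f x ≤ 0) (h3 : ∀ x ∈ E, f x ≤ -1) :
    f z ≤ relExtremal E Ω z :=
  le_csSup ((bddAbove_Iic).mono (relExtremal_set_bddAbove E Ω z hz))
    ⟨f, h1, h2, h3, rfl⟩

end Aux

lemma norm_embedR {n : ℕ} (x : EuclideanSpace ℝ (Fin n)) : ‖embedR x‖ = ‖x‖ := by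
  rw [EuclideanSpace.norm_eq, EuclideanSpace.norm_eq]
  congr 1
  refine Finset.sum_congr rfl fun i _ => ?_
  simp [embedR]

/-- submultiplicativity of the relative extremal function suprema. -/
theorem relExtremal_sup_submul (n : ℕ) (a : ℝ) (ha : 1 < a)
    (E : Set (EuclideanSpace ℝ (Fin n))) (hE : E ⊆ Metric.ball 0 1)
    (hmeas : MeasurableSet E) (hnp : ¬ IsPluripolar (embedR '' E)) :
    |sSup (relExtremal (embedR '' E) (Metric.ball 0 a) ''
        Metric.ball (0 : EuclideanSpace ℂ (Fin n)) 1)| ≥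
      |sSup (relExtremal (embedR '' (Metric.ball (0 : EuclideanSpace ℝ (Fin n)) 1))
          (Metric.ball 0 a) '' Metric.ball (0 : EuclideanSpace ℂ (Fin n)) 1)| *
      |sSup (relExtremal (embedR '' E) (Metric.ball 0 a) ''
          (embedR '' Metric.ball (0 : EuclideanSpace ℝ (Fin n)) 1))| := by
  classical
  set Ω : Set (EuclideanSpace ℂ (Fin n)) := Metric.ball 0 a with hΩ
  set Bc : Set (EuclideanSpace ℂ (Fin n)) := Metric.ball 0 1 with hBc
  set Br : Set (EuclideanSpace ℂ (Fin n)) :=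
    embedR '' (Metric.ball (0 : EuclideanSpace ℝ (Fin n)) 1) with hBr
  set EE : Set (EuclideanSpace ℂ (Fin n)) := embedR '' E with hEE
  have hBcΩ : Bc ⊆ Ω := Metric.ball_subset_ball ha.le
  have hBrBc : Br ⊆ Bc := by
    rintro _ ⟨x, hx, rfl⟩
    rw [hBc, Metric.mem_ball, dist_zero_right, norm_embedR]
    simpa using hx
  have hBrΩ : Br ⊆ Ω := hBrBc.trans hBcΩ
  have hBcne : Bc.Nonempty := ⟨0, by simp [hBc]⟩
  have hBrne : Br.Nonempty := ⟨embedR 0, 0, by simp, rfl⟩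
  set uE := relExtremal EE Ω with huE
  set uB := relExtremal Br Ω with huB
  set A := sSup (uE '' Bc) with hA
  set B := sSup (uB '' Bc) with hB
  set C := sSup (uE '' Br) with hC
  have hEBr : uE '' Br ⊆ Set.Iic 0 := by
    rintro _ ⟨x, hx, rfl⟩; exact relExtremal_nonpos _ _ _ (hBrΩ hx)
  have hEBc : uE '' Bc ⊆ Set.Iic 0 := by
    rintro _ ⟨x, hx, rfl⟩; exact relExtremal_nonpos _ _ _ (hBcΩ hx)
  have hBBc : uB '' Bc ⊆ Set.Iic 0 := by
    rintro _ ⟨x, hx, rfl⟩; exact relExtremal_nonpos _ _ _ (hBcΩ hx)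
  have hC0 : C ≤ 0 := csSup_le (hBrne.image _) hEBr
  have hA0 : A ≤ 0 := csSup_le (hBcne.image _) hEBc
  have hB0 : B ≤ 0 := csSup_le (hBcne.image _) hBBc
  rcases eq_or_lt_of_le hC0 with hCeq | hClt
  · rw [hCeq, abs_zero, mul_zero]
    exact abs_nonneg _
  · have hnC : (0:ℝ) < -C := neg_pos.2 hClt
    have key : ∀ z ∈ Bc, uE z ≤ (-C) * uB z := by
      intro z hz
      refine csSup_le ⟨_, relExtremal_set_nonempty EE Ω z⟩ ?_
      rintro y ⟨f, hpsh, h0, hm1, rfl⟩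
      have hgm1 : ∀ x ∈ Br, (-C)⁻¹ * f x ≤ -1 := by
        intro x hx
        have h1 : f x ≤ uE x := le_relExtremal EE Ω x (hBrΩ hx) hpsh h0 hm1
        have h2 : uE x ≤ C := le_csSup (bddAbove_Iic.mono hEBr) (Set.mem_image_of_mem _ hx)
        have h3 : f x ≤ C := h1.trans h2
        have h4 := mul_le_mul_of_nonneg_left h3 (inv_pos.2 hnC).le
        have h5 : (-C)⁻¹ * C = -1 := by rw [inv_mul_eq_div, div_neg, div_self hClt.ne]
        linarith [h4, h5.le]
      have hg0 : ∀ x ∈ Ω, (-C)⁻¹ * f x ≤ 0 :=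
        fun x hx => mul_nonpos_of_nonneg_of_nonpos (inv_pos.2 hnC).le (h0 x hx)
      have hgz : (-C)⁻¹ * f z ≤ uB z :=
        le_relExtremal Br Ω z (hBcΩ hz) (isPSHOn_smul hpsh (inv_pos.2 hnC)) hg0 hgm1
      have := mul_le_mul_of_nonneg_left hgz hnC.le
      have hfz : f z = (-C) * ((-C)⁻¹ * f z) := by
        rw [← mul_assoc, mul_inv_cancel₀ (by linarith : (-C) ≠ 0), one_mul]
      linarith [this, hfz.le]
    have hAB : A ≤ (-C) * B := by
      refine csSup_le (hBcne.image _) ?_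
      rintro _ ⟨z, hz, rfl⟩
      have h1 : uB z ≤ B := le_csSup (bddAbove_Iic.mono hBBc) (Set.mem_image_of_mem _ hz)
      exact (key z hz).trans (mul_le_mul_of_nonneg_left h1 hnC.le)
    rw [abs_of_nonpos hA0, abs_of_nonpos hB0, abs_of_neg hClt]
    nlinarith [hAB]
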